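/- Fix V ≥ 0 and δ ∈ [0,1). For p ∈ (0,1) define D(p) = [2e^{V}/(1+2e^{V}) + (δ/(1-δ))·2e^{V}/(1+2e^{V})] - [(1-p)·(e^{V}+e^{-1})/(1+e^{V}+e^{-1}) + p·(e^{V}+e^{(1-p)/p})/(1+e^{V}+e^{(1-p)/p}) + (δ/(1-δ))·( p·2e^{(1-p)/p}/(1+2e^{(1-p)/p}) + (1-p)·2e^{V}/(1+2e^{V}) )]. Then D(p) tends, as p → 0⁺, to 2e^{V}/(1+2e^{V}) - (e^{V}+e^{-1})/(1+e^{V}+e^{-1}), and this limit is strictly positive. -/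
import Mathlib


open Real Filter Topology

private lemma mul_frac_tendsto_zero (f : ℝ → ℝ) (hf : ∀ p ∈ Set.Ioi (0:ℝ), 0 ≤ f p ∧ f p ≤ 1) :
    Tendsto (fun p : ℝ => p * f p) (𝓝[>] (0:ℝ)) (𝓝 0) := by
  apply squeeze_zero' (eventually_nhdsWithin_of_forall fun p hp => ?_)
    (eventually_nhdsWithin_of_forall (fun p hp => ?_))
    (tendsto_id.mono_left nhdsWithin_le_nhds)
  · exact mul_nonneg (le_of_lt hp) (hf p hp).1
  · simpa using mul_le_of_le_one_right (le_of_lt hp) (hf p hp).2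

/-- Engagement gap between the Always Popular Policy and the exploration-based upper bound:
as `p → 0⁺`, `D(p)` tends to `2e^V/(1+2e^V) - (e^V+e^{-1})/(1+e^V+e^{-1})`, which is
strictly positive. Here `V ≥ 0` and `δ ∈ [0,1)`. -/
theorem app_engagement_optimal_limit (V δ : ℝ) (hV : 0 ≤ V) (hδ : δ ∈ Set.Ico (0 : ℝ) 1) :
    Tendsto (fun p : ℝ =>
        (2 * Real.exp V / (1 + 2 * Real.exp V)
            + (δ / (1 - δ)) * (2 * Real.exp V / (1 + 2 * Real.exp V)))
        - ((1 - p) * ((Real.exp V + Real.exp (-1)) / (1 + Real.exp V + Real.exp (-1)))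
            + p * ((Real.exp V + Real.exp ((1 - p) / p))
                / (1 + Real.exp V + Real.exp ((1 - p) / p)))
            + (δ / (1 - δ)) *
                (p * (2 * Real.exp ((1 - p) / p) / (1 + 2 * Real.exp ((1 - p) / p)))
                  + (1 - p) * (2 * Real.exp V / (1 + 2 * Real.exp V)))))
      (𝓝[>] (0 : ℝ))
      (𝓝 (2 * Real.exp V / (1 + 2 * Real.exp V)
            - (Real.exp V + Real.exp (-1)) / (1 + Real.exp V + Real.exp (-1))))
    ∧ 0 < 2 * Real.exp V / (1 + 2 * Real.exp V)
            - (Real.exp V + Real.exp (-1)) / (1 + Real.exp V + Real.exp (-1)) := by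
  set A : ℝ := 2 * Real.exp V / (1 + 2 * Real.exp V) with hA
  set B : ℝ := (Real.exp V + Real.exp (-1)) / (1 + Real.exp V + Real.exp (-1)) with hB
  set r : ℝ := δ / (1 - δ) with hr
  constructor
  · -- limit
    have h1 : Tendsto (fun p : ℝ =>
        p * ((Real.exp V + Real.exp ((1 - p) / p)) / (1 + Real.exp V + Real.exp ((1 - p) / p))))
        (𝓝[>] (0:ℝ)) (𝓝 0) := by
      apply mul_frac_tendsto_zero
      intro p _
      have hd : (0:ℝ) < 1 + Real.exp V + Real.exp ((1 - p) / p) := by positivity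
      constructor
      · positivity
      · rw [div_le_one hd]; linarith
    have h2 : Tendsto (fun p : ℝ =>
        p * (2 * Real.exp ((1 - p) / p) / (1 + 2 * Real.exp ((1 - p) / p))))
        (𝓝[>] (0:ℝ)) (𝓝 0) := by
      apply mul_frac_tendsto_zero
      intro p _
      have hd : (0:ℝ) < 1 + 2 * Real.exp ((1 - p) / p) := by positivity
      constructor
      · positivity
      · rw [div_le_one hd]; linarith
    have hp0 : Tendsto (fun p : ℝ => p) (𝓝[>] (0:ℝ)) (𝓝 0) :=
      tendsto_id.mono_left nhdsWithin_le_nhds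
    have hsub : Tendsto (fun p : ℝ => 1 - p) (𝓝[>] (0:ℝ)) (𝓝 1) := by
      have : Tendsto (fun p : ℝ => 1 - p) (𝓝 (0:ℝ)) (𝓝 (1 - 0)) :=
        (continuous_const.sub continuous_id).tendsto 0
      simpa using this.mono_left nhdsWithin_le_nhds
    have h3 : Tendsto (fun p : ℝ => (1 - p) * B) (𝓝[>] (0:ℝ)) (𝓝 B) := by
      simpa using hsub.mul_const B
    have h4 : Tendsto (fun p : ℝ => (1 - p) * A) (𝓝[>] (0:ℝ)) (𝓝 A) := by
      simpa using hsub.mul_const A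
    have : Tendsto (fun p : ℝ =>
        (A + r * A) - ((1 - p) * B
          + p * ((Real.exp V + Real.exp ((1 - p) / p)) / (1 + Real.exp V + Real.exp ((1 - p) / p)))
          + r * (p * (2 * Real.exp ((1 - p) / p) / (1 + 2 * Real.exp ((1 - p) / p)))
              + (1 - p) * A)))
        (𝓝[>] (0:ℝ)) (𝓝 ((A + r * A) - (B + 0 + r * (0 + A)))) :=
      tendsto_const_nhds.sub (((h3.add h1)).add ((h2.add h4).const_mul r))
    have heq : (A + r * A) - (B + 0 + r * (0 + A)) = A - B := by ring
    rw [heq] at this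
    exact this
  · -- positivity
    have he : Real.exp (-1) < Real.exp V := Real.exp_lt_exp.2 (by linarith)
    have hd1 : (0:ℝ) < 1 + 2 * Real.exp V := by positivity
    have hd2 : (0:ℝ) < 1 + Real.exp V + Real.exp (-1) := by positivity
    rw [sub_pos, hA, hB, div_lt_div_iff₀ hd2 hd1]
    nlinarith [Real.exp_pos V, Real.exp_pos (-1)]
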